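/- Let v ⊆ w be subsets of {1,…,n}. Then: (a) S_w^⊥ ⊆ S_v^⊥ · Γ_w^⊥, i.e., every element of S_w^⊥ is a product of an element of S_v^⊥ and an element of Γ_w^⊥; (b) for every prime ideal P of R = k[y_1,…,y_n] with P ∩ {y_1,…,y_n} = {y_i : i ∈ w}, one has (P : S_v^⊥) ⊆ (P : S_w^⊥). -/

import Mathlib

open MvPolynomial

section Aux

variable {k : Type*} [Field k] [IsAlgClosed k]

lemma units_exists_zpow (z : ℤ) (hz : z ≠ 0) (a : kˣ) : ∃ u : kˣ, u ^ z = a := by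
  obtain ⟨c, hc⟩ := IsAlgClosed.exists_pow_nat_eq (a : k)
    (Nat.pos_of_ne_zero (Int.natAbs_ne_zero.mpr hz))
  have hc0 : c ≠ 0 := by
    rintro rfl
    rw [zero_pow (Int.natAbs_ne_zero.mpr hz)] at hc
    exact a.ne_zero hc.symm
  have hu : (Units.mk0 c hc0) ^ z.natAbs = a := Units.ext (by simpa using hc)
  rcases Int.natAbs_eq z with h | h
  · exact ⟨Units.mk0 c hc0, by rw [h, zpow_natCast, hu]⟩
  · exact ⟨(Units.mk0 c hc0)⁻¹, by rw [h, zpow_neg, inv_zpow, inv_inv, zpow_natCast, hu]⟩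

lemma addchar_extend {G : Type*} [AddCommGroup G] (D : AddSubgroup G)
    (φ : D →+ Additive kˣ) : ∃ ψ : G →+ Additive kˣ, ∀ x : D, ψ (x : G) = φ x := by
  letI : DivisibleBy (Additive kˣ) ℤ :=
    divisibleByOfSMulRightSurj (Additive kˣ) ℤ (by
      intro z hz a
      obtain ⟨u, hu⟩ := units_exists_zpow z hz a.toMul
      exact ⟨Additive.ofMul u, by show z • Additive.ofMul u = a; rw [← ofMul_zpow, hu]; rfl⟩)
  obtain ⟨ψ, hψ⟩ := (Module.Baer.of_divisible (Additive kˣ)).extension_property_addMonoidHom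
    D.subtype D.subtype_injective φ
  exact ⟨ψ, fun x => DFunLike.congr_fun hψ x⟩

end Aux

variable {k : Type*} [Field k] {n : ℕ}

/-- The subgroup `Γ_u` of `Γ = ℤⁿ` generated by the standard basis vectors `ε_i`, `i ∉ u`. -/
def GammaU (u : Set (Fin n)) : AddSubgroup (Fin n → ℤ) :=
  AddSubgroup.closure {α | ∃ i ∉ u, α = Pi.single i 1}

/-- `S_u = rad(σ|_{Γ_u}) = {α ∈ Γ_u : σ(α,β) = 1 for all β ∈ Γ_u}`. -/
def SU (σ : (Fin n → ℤ) → (Fin n → ℤ) → kˣ) (u : Set (Fin n)) : Set (Fin n → ℤ) :=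
  {α | α ∈ GammaU u ∧ ∀ β ∈ GammaU u, σ α β = 1}

/-- The orthogonal `T^⊥ = {h ∈ H = Hom(Γ,kˣ) : ⟨h,α⟩ = 1 for all α ∈ T}`. -/
def perpSet (T : Set (Fin n → ℤ)) : Set (Multiplicative (Fin n → ℤ) →* kˣ) :=
  {h | ∀ α ∈ T, h (Multiplicative.ofAdd α) = 1}

/-- The action of `h ∈ H = Hom(Γ,kˣ)` on `R = k[y₁,…,yₙ]`, `yᵢ ↦ ⟨h,εᵢ⟩yᵢ`. -/
noncomputable def hact (h : Multiplicative (Fin n → ℤ) →* kˣ) :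
    MvPolynomial (Fin n) k →ₐ[k] MvPolynomial (Fin n) k :=
  aeval fun i => ((h (Multiplicative.ofAdd (Pi.single i 1)) : kˣ) : k) • X i

/-- `(I : T) = ⋂_{h ∈ T} h(I)` for a set `T` of characters. -/
noncomputable def resH (T : Set (Multiplicative (Fin n → ℤ) →* kˣ))
    (I : Ideal (MvPolynomial (Fin n) k)) : Ideal (MvPolynomial (Fin n) k) :=
  ⨅ h ∈ T, Ideal.comap (hact h) I

/-- Lemma 4.8: for `v ⊆ w ⊆ {1,…,n}` (`k` algebraically closed, `σ` an
alternating bicharacter on `Γ = ℤⁿ`):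
(a) `S_w^⊥ ⊆ S_v^⊥ · Γ_w^⊥`;
(b) `(P : S_v^⊥) ⊆ (P : S_w^⊥)` for every `P ∈ spec_w R`. -/
theorem stmt_19 {k : Type*} [Field k] [IsAlgClosed k] {n : ℕ}
    (σ : (Fin n → ℤ) → (Fin n → ℤ) → kˣ)
    (halt : ∀ α, σ α α = 1)
    (hmul₁ : ∀ α β γ, σ (α + β) γ = σ α γ * σ β γ)
    (hmul₂ : ∀ α β γ, σ α (β + γ) = σ α β * σ α γ)
    (v w : Set (Fin n)) (hvw : v ⊆ w) :
    -- (a)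
    (∀ h ∈ perpSet (k := k) (SU σ w),
      ∃ h₁ ∈ perpSet (k := k) (SU σ v),
        ∃ h₂ ∈ perpSet (k := k) (↑(GammaU (n := n) w) : Set (Fin n → ℤ)),
          h = h₁ * h₂) ∧
    -- (b)
    (∀ P : Ideal (MvPolynomial (Fin n) k), P.IsPrime →
      (∀ i, X i ∈ P ↔ i ∈ w) →
      resH (perpSet (SU σ v)) P ≤ resH (perpSet (SU σ w)) P) := by
  -- basic bicharacter facts
  have h0 : ∀ β, σ 0 β = 1 := by
    intro β
    have := hmul₁ 0 0 β
    rw [add_zero] at this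
    exact (left_eq_mul.mp this)
  have hneg : ∀ α β, σ (-α) β = (σ α β)⁻¹ := by
    intro α β
    have := hmul₁ (-α) α β
    rw [neg_add_cancel, h0] at this
    exact eq_inv_of_mul_eq_one_left this.symm
  -- the subgroup with carrier `SU σ v`
  set A : AddSubgroup (Fin n → ℤ) :=
    { carrier := SU σ v
      add_mem' := fun {a b} ha hb =>
        ⟨add_mem ha.1 hb.1, fun β hβ => by rw [hmul₁, ha.2 β hβ, hb.2 β hβ, mul_one]⟩
      zero_mem' := ⟨zero_mem _, fun β _ => h0 β⟩
      neg_mem' := fun {a} ha =>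
        ⟨neg_mem ha.1, fun β hβ => by rw [hneg, ha.2 β hβ, inv_one]⟩ } with hA
  have hAmem : ∀ {α : Fin n → ℤ}, α ∈ A ↔ α ∈ SU σ v := Iff.rfl
  have hGle : GammaU w ≤ GammaU (n := n) v := by
    apply AddSubgroup.closure_mono
    rintro α ⟨i, hi, rfl⟩
    exact ⟨i, fun hc => hi (hvw hc), rfl⟩
  have key : ∀ {α : Fin n → ℤ}, α ∈ A → α ∈ GammaU w → α ∈ SU σ w := by
    intro α hA' hB
    exact ⟨hB, fun β hβ => hA'.2 β (hGle hβ)⟩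
  -- part (a)
  have parta : ∀ h ∈ perpSet (k := k) (SU σ w),
      ∃ h₁ ∈ perpSet (k := k) (SU σ v),
        ∃ h₂ ∈ perpSet (k := k) (↑(GammaU (n := n) w) : Set (Fin n → ℤ)),
          h = h₁ * h₂ := by
    intro h hh
    have htriv : ∀ {α : Fin n → ℤ}, α ∈ A → α ∈ GammaU w →
        h (Multiplicative.ofAdd α) = 1 := fun hA' hB => hh _ (key hA' hB)
    have hmulh : ∀ x y : Fin n → ℤ, h (Multiplicative.ofAdd (x + y)) =
        h (Multiplicative.ofAdd x) * h (Multiplicative.ofAdd y) := by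
      intro x y
      rw [ofAdd_add, map_mul]
    set D : AddSubgroup (Fin n → ℤ) := A ⊔ GammaU w with hD
    have hdec : ∀ x : D, ∃ b, b ∈ GammaU w ∧ (x : Fin n → ℤ) - b ∈ A := by
      intro x
      obtain ⟨a, ha, b, hb, hab⟩ := AddSubgroup.mem_sup.mp x.2
      exact ⟨b, hb, by rw [← hab, add_sub_cancel_right]; exact ha⟩
    choose b hbB hbA using hdec
    have φadd : ∀ x y : D,
        h (Multiplicative.ofAdd (b (x + y))) =
          h (Multiplicative.ofAdd (b x)) * h (Multiplicative.ofAdd (b y)) := by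
      intro x y
      set s : Fin n → ℤ := b (x + y) - b x - b y with hs
      have hsB : s ∈ GammaU w := sub_mem (sub_mem (hbB _) (hbB _)) (hbB _)
      have hsA : s ∈ A := by
        have h1 := hbA x
        have h2 := hbA y
        have h3 := hbA (x + y)
        have : s = ((x : Fin n → ℤ) - b x) + ((y : Fin n → ℤ) - b y)
            - (((x + y : D) : Fin n → ℤ) - b (x + y)) := by
          push_cast
          rw [hs]; abel
        rw [this]
        exact sub_mem (add_mem h1 h2) h3
      have hbxy : b (x + y) = b x + b y + s := by rw [hs]; abel
      rw [hbxy, hmulh, hmulh, htriv hsA hsB, mul_one]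
    set φ : D →+ Additive kˣ :=
      AddMonoidHom.mk' (fun x => Additive.ofMul (h (Multiplicative.ofAdd (b x))))
        (fun x y => by
          simp only [← ofMul_mul, φadd x y]) with hφ
    obtain ⟨ψ, hψ⟩ := addchar_extend D φ
    set h₁ : Multiplicative (Fin n → ℤ) →* kˣ :=
      MonoidHom.mk' (fun x => Additive.toMul (ψ x.toAdd))
        (fun x y => by rw [toAdd_mul, map_add, toMul_add]) with hh₁
    have hψval : ∀ (α : Fin n → ℤ) (hα : α ∈ D),
        h₁ (Multiplicative.ofAdd α) = h (Multiplicative.ofAdd (b ⟨α, hα⟩)) := by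
      intro α hα
      have := hψ ⟨α, hα⟩
      simp only [hφ, AddMonoidHom.mk'_apply] at this
      show Additive.toMul (ψ α) = _
      rw [this]
      rfl
    refine ⟨h₁, ?_, h₁⁻¹ * h, ?_, ?_⟩
    · intro α hα
      have hαA : α ∈ A := hAmem.mpr hα
      have hαD : α ∈ D := (le_sup_left : A ≤ D) hαA
      rw [hψval α hαD]
      have hb' := hbA ⟨α, hαD⟩
      have hbAmem : b ⟨α, hαD⟩ ∈ A := by
        have : b ⟨α, hαD⟩ = α - (α - b ⟨α, hαD⟩) := by abel
        rw [this]
        exact sub_mem hαA hb'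
      exact htriv hbAmem (hbB _)
    · intro α hα
      have hαB : α ∈ GammaU w := hα
      have hαD : α ∈ D := (le_sup_right : GammaU w ≤ D) hαB
      have h1 : h₁ (Multiplicative.ofAdd α) = h (Multiplicative.ofAdd (b ⟨α, hαD⟩)) :=
        hψval α hαD
      have hd : α - b ⟨α, hαD⟩ ∈ A := hbA ⟨α, hαD⟩
      have hdB : α - b ⟨α, hαD⟩ ∈ GammaU w := sub_mem hαB (hbB _)
      have h2 : h (Multiplicative.ofAdd α) = h (Multiplicative.ofAdd (b ⟨α, hαD⟩)) := by
        have heq : α = b ⟨α, hαD⟩ + (α - b ⟨α, hαD⟩) := by abel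
        conv_lhs => rw [heq]
        rw [hmulh, htriv hd hdB, mul_one]
      show (h₁ (Multiplicative.ofAdd α))⁻¹ * h (Multiplicative.ofAdd α) = 1
      rw [h1, h2, inv_mul_cancel]
    · exact (mul_inv_cancel_left h₁ h).symm
  refine ⟨parta, ?_⟩
  -- part (b)
  intro P hP hPX
  have hcomp : ∀ h₁ h₂ : Multiplicative (Fin n → ℤ) →* kˣ,
      hact (k := k) (h₁ * h₂) = (hact h₂).comp (hact h₁) := by
    intro h₁ h₂
    apply algHom_ext
    intro i
    simp [hact, aeval_X, smul_smul, mul_comm]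
  have hpres : ∀ (h₂ : Multiplicative (Fin n → ℤ) →* kˣ),
      h₂ ∈ perpSet (k := k) (↑(GammaU (n := n) w) : Set (Fin n → ℤ)) →
      ∀ g ∈ P, hact h₂ g ∈ P := by
    intro h₂ hh₂ g hg
    have hquot : (Ideal.Quotient.mkₐ k P).comp (hact h₂) = Ideal.Quotient.mkₐ k P := by
      apply algHom_ext
      intro i
      simp only [AlgHom.comp_apply, hact, aeval_X, Ideal.Quotient.mkₐ_eq_mk, map_smul]
      by_cases hi : i ∈ w
      · rw [Ideal.Quotient.eq_zero_iff_mem.mpr ((hPX i).mpr hi), smul_zero]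
      · have : Pi.single i 1 ∈ GammaU w :=
          AddSubgroup.subset_closure ⟨i, hi, rfl⟩
        rw [hh₂ _ this]
        simp
    have := congrArg (fun f => f g) congr(($hquot : _ →ₐ[k] _))
    have heq : Ideal.Quotient.mk P (hact h₂ g) = Ideal.Quotient.mk P g :=
      DFunLike.congr_fun hquot g
    rw [Ideal.Quotient.eq_zero_iff_mem.mpr hg] at heq
    exact Ideal.Quotient.eq_zero_iff_mem.mp heq
  intro f hf
  simp only [resH, Ideal.mem_iInf] at hf ⊢
  intro h hh
  obtain ⟨h₁, hh₁, h₂, hh₂, rfl⟩ := parta h hh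
  have hf₁ : hact h₁ f ∈ P := Ideal.mem_comap.mp (hf h₁ hh₁)
  rw [Ideal.mem_comap, hcomp, AlgHom.comp_apply]
  exact hpres h₂ hh₂ _ hf₁
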